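/- Let ι be a finite index set, α a finite type of states, x ~ μ_x and y ~ μ_y random variables with coordinate maps c_i(·) ∈ α, and t ≤ |ι|. For each i ∈ ι define w_i = max_{p ∈ α} ( μ_x(c_i(x) = p) − μ_y(c_i(y) = p) ). Then the minimization over codes c_p ∈ α^{N*} and subsets N* ⊆ ι with |N*| = t of E_{μ_x}[d_H(c^{N*}(x), c_p)] − E_{μ_y}[d_H(c^{N*}(y), c_p)] is equivalent to the maximization over size-t subsets N* of Σ_{i ∈ N*} w_i; precisely, the minimum value of the former equals −max_{|N*| = t} Σ_{i ∈ N*} w_i. -/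

import Mathlib

open MeasureTheory

lemma stmt13_key {ι α Ω : Type*} [DecidableEq ι] [DecidableEq α]
    [MeasurableSpace α] [MeasurableSingletonClass α]
    [MeasurableSpace Ω] (μ : Measure Ω) [IsProbabilityMeasure μ]
    (C : Ω → ι → α) (hC : ∀ i, Measurable fun ω => C ω i) (N : Finset ι) (cp : ι → α) :
    (∫ ω, ((N.filter fun i => C ω i ≠ cp i).card : ℝ) ∂μ) =
      ∑ i ∈ N, (1 - (μ {ω | C ω i = cp i}).toReal) := by
  have hms : ∀ i, MeasurableSet {ω | C ω i = cp i} :=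
    fun i => hC i (measurableSet_singleton (cp i))
  have h1 : ∀ ω, ((N.filter fun i => C ω i ≠ cp i).card : ℝ) =
      ∑ i ∈ N, Set.indicator {ω | C ω i = cp i}ᶜ (fun _ => (1:ℝ)) ω := by
    intro ω
    rw [Finset.card_filter]
    push_cast
    refine Finset.sum_congr rfl fun i _ => ?_
    by_cases h : C ω i = cp i <;> simp [Set.indicator_apply, h]
  simp_rw [h1]
  rw [integral_finset_sum]
  · refine Finset.sum_congr rfl fun i _ => ?_
    rw [integral_indicator_const _ ((hms i).compl), smul_eq_mul, mul_one, measureReal_def,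
      prob_compl_eq_one_sub (hms i),
      ENNReal.toReal_sub_of_le prob_le_one ENNReal.one_ne_top, ENNReal.toReal_one]
  · exact fun i _ => (integrable_const (1:ℝ)).indicator ((hms i).compl)

/-- With per-neuron weights `w i = max_{p ∈ α} (μx(c_i(x) = p) − μy(c_i(y) = p))`, the
minimization over codes `cp` and size-`t` subsets `N*` of
`E_{μx}[d_H(c^{N*}(x), cp)] − E_{μy}[d_H(c^{N*}(y), cp)]` is equivalent to maximizing
`Σ_{i ∈ N*} w i` over size-`t` subsets: the minimum value of the former equals minus the
maximum value of the latter. -/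
theorem stmt13 {ι α Ωx Ωy : Type*} [Fintype ι] [DecidableEq ι]
    [Fintype α] [DecidableEq α] [Nonempty α]
    [MeasurableSpace α] [MeasurableSingletonClass α]
    [MeasurableSpace Ωx] [MeasurableSpace Ωy]
    (μx : Measure Ωx) (μy : Measure Ωy)
    [IsProbabilityMeasure μx] [IsProbabilityMeasure μy]
    (Cx : Ωx → ι → α) (Cy : Ωy → ι → α)
    (hCx : ∀ i, Measurable fun ω => Cx ω i) (hCy : ∀ i, Measurable fun ω => Cy ω i)
    (t : ℕ) (ht : t ≤ Fintype.card ι)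
    (w : ι → ℝ)
    (hw : ∀ i, w i = Finset.univ.sup' Finset.univ_nonempty
      (fun p : α => (μx {ω | Cx ω i = p}).toReal - (μy {ω | Cy ω i = p}).toReal))
    (obj : Finset ι → (ι → α) → ℝ)
    (hobj : ∀ N cp, obj N cp =
      (∫ ω, ((N.filter fun i => Cx ω i ≠ cp i).card : ℝ) ∂μx) -
      (∫ ω, ((N.filter fun i => Cy ω i ≠ cp i).card : ℝ) ∂μy)) :
    ∃ M : ℝ,
      IsGreatest {s : ℝ | ∃ N : Finset ι, N.card = t ∧ s = ∑ i ∈ N, w i} M ∧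
      IsLeast {r : ℝ | ∃ (N : Finset ι) (cp : ι → α), N.card = t ∧ r = obj N cp} (-M) := by
  classical
  set f : ι → α → ℝ :=
    fun i p => (μx {ω | Cx ω i = p}).toReal - (μy {ω | Cy ω i = p}).toReal with hf
  -- objective formula
  have hobj' : ∀ N cp, obj N cp = -∑ i ∈ N, f i (cp i) := by
    intro N cp
    rw [hobj, stmt13_key μx Cx hCx N cp, stmt13_key μy Cy hCy N cp,
      ← Finset.sum_sub_distrib, ← Finset.sum_neg_distrib]
    refine Finset.sum_congr rfl fun i _ => ?_
    simp only [hf]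
    ring
  -- optimal code
  have hcp : ∀ i, ∃ p : α, w i = f i p := by
    intro i
    obtain ⟨p, -, hp⟩ := Finset.exists_mem_eq_sup' (Finset.univ_nonempty (α := α))
      (fun p : α => (μx {ω | Cx ω i = p}).toReal - (μy {ω | Cy ω i = p}).toReal)
    exact ⟨p, by rw [hw i, hp]⟩
  choose cpStar hcpStar using hcp
  have hle : ∀ i (p : α), f i p ≤ w i := by
    intro i p
    rw [hw i]
    exact Finset.le_sup' _ (Finset.mem_univ p)
  -- the finite family of size-t subsets
  set S : Finset (Finset ι) := Finset.univ.powersetCard t with hSdef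
  have hS : S.Nonempty := by
    obtain ⟨N, hNsub, hNcard⟩ := Finset.exists_subset_card_eq (s := (Finset.univ : Finset ι)) (n := t)
      (by simpa using ht)
    exact ⟨N, Finset.mem_powersetCard.2 ⟨hNsub, hNcard⟩⟩
  set M : ℝ := S.sup' hS (fun N => ∑ i ∈ N, w i) with hM
  have hmemS : ∀ N : Finset ι, N ∈ S ↔ N.card = t := by
    intro N; simp [hSdef, Finset.mem_powersetCard]
  obtain ⟨N0, hN0S, hN0⟩ := Finset.exists_mem_eq_sup' hS (fun N => ∑ i ∈ N, w i)
  refine ⟨M, ⟨⟨N0, (hmemS N0).1 hN0S, hN0⟩, ?_⟩, ⟨⟨N0, cpStar, (hmemS N0).1 hN0S, ?_⟩, ?_⟩⟩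
  · rintro s ⟨N, hNt, rfl⟩
    rw [hM]
    exact Finset.le_sup' (fun N => ∑ i ∈ N, w i) ((hmemS N).2 hNt)
  · rw [hobj', hM, hN0]
    congr 1
    exact Finset.sum_congr rfl fun i _ => hcpStar i
  · rintro r ⟨N, cp, hNt, rfl⟩
    rw [hobj']
    have h1 : ∑ i ∈ N, f i (cp i) ≤ ∑ i ∈ N, w i :=
      Finset.sum_le_sum fun i _ => hle i (cp i)
    have h2 : ∑ i ∈ N, w i ≤ M := by
      rw [hM]
      exact Finset.le_sup' (fun N => ∑ i ∈ N, w i) ((hmemS N).2 hNt)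
    linarith
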